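/- arXiv:2401.06446 — 2 statements merged into one kernel-verified Lean document; each statement's English description precedes it below -/
import Mathlib

section
/- Let V = σα²(I_g ⊗ J_h ⊗ J_m) + σβ²(J_g ⊗ I_h ⊗ J_m) + σγ²(I_g ⊗ I_h ⊗ J_m) + σe²(I_g ⊗ I_h ⊗ I_m), with σe² > 0 and σα², σβ², σγ² ≥ 0. Define λ0 = σe², λ1 = σe² + mσγ², λ2 = λ1 + hmσα², λ3 = λ1 + gmσβ², λ4 = λ1 + hmσα² + gmσβ². Then V⁻¹ = (1/λ0)(I_g ⊗ I_h ⊗ C_m) + (1/λ1)(C_g ⊗ C_h ⊗ J̄_m) + (1/λ2)(C_g ⊗ J̄_h ⊗ J̄_m) + (1/λ3)(J̄_g ⊗ C_h ⊗ J̄_m) + (1/λ4)(J̄_g ⊗ J̄_h ⊗ J̄_m). -/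
open Matrix Kronecker

noncomputable def Jmat (a : ℕ) : Matrix (Fin a) (Fin a) ℝ := Matrix.of fun _ _ => 1
noncomputable def Jbar (a : ℕ) : Matrix (Fin a) (Fin a) ℝ := ((a : ℝ)⁻¹) • Jmat a
noncomputable def Cmat (a : ℕ) : Matrix (Fin a) (Fin a) ℝ := 1 - Jbar a

/-- The dispersion matrix of the balanced two-way crossed random effects model. -/
noncomputable def Vmat (g h m : ℕ) (sa sb sc se : ℝ) :
    Matrix ((Fin g × Fin h) × Fin m) ((Fin g × Fin h) × Fin m) ℝ :=
  sa • (((1 : Matrix (Fin g) (Fin g) ℝ) ⊗ₖ Jmat h) ⊗ₖ Jmat m) +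
  sb • ((Jmat g ⊗ₖ (1 : Matrix (Fin h) (Fin h) ℝ)) ⊗ₖ Jmat m) +
  sc • (((1 : Matrix (Fin g) (Fin g) ℝ) ⊗ₖ (1 : Matrix (Fin h) (Fin h) ℝ)) ⊗ₖ Jmat m) +
  se • (1 : Matrix ((Fin g × Fin h) × Fin m) ((Fin g × Fin h) × Fin m) ℝ)

lemma JJ (a : ℕ) : Jmat a * Jmat a = (a:ℝ) • Jmat a := by
  ext i j; simp [Jmat, Matrix.mul_apply]
lemma Jbar_mul_Jbar (a : ℕ) (ha : 0 < a) : Jbar a * Jbar a = Jbar a := by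
  have h0 : (a:ℝ) ≠ 0 := by positivity
  simp [Jbar, Matrix.smul_mul, Matrix.mul_smul, JJ, smul_smul]
  rw [inv_mul_cancel₀ h0, mul_one]
lemma Cmat_mul_Jbar (a : ℕ) (ha : 0 < a) : Cmat a * Jbar a = 0 := by
  simp [Cmat, sub_mul, Jbar_mul_Jbar a ha]
lemma Jbar_mul_Cmat (a : ℕ) (ha : 0 < a) : Jbar a * Cmat a = 0 := by
  simp [Cmat, mul_sub, Jbar_mul_Jbar a ha]
lemma Cmat_mul_Cmat (a : ℕ) (ha : 0 < a) : Cmat a * Cmat a = Cmat a := by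
  rw [Cmat, mul_sub, mul_one, sub_mul, one_mul, Jbar_mul_Jbar a ha]
  simp
lemma Cmat_add_Jbar (a : ℕ) : Cmat a + Jbar a = 1 := by simp [Cmat]
lemma Jmat_eq (a : ℕ) (ha : 0 < a) : Jmat a = (a:ℝ) • Jbar a := by
  have h0 : (a:ℝ) ≠ 0 := by positivity
  rw [Jbar, smul_smul, mul_inv_cancel₀ h0, one_smul]

set_option maxHeartbeats 1000000 in
theorem stmt3 (g h m : ℕ) (hg : 0 < g) (hh : 0 < h) (hm : 0 < m)
    (sa sb sc se : ℝ) (hsa : 0 ≤ sa) (hsb : 0 ≤ sb) (hsc : 0 ≤ sc) (hse : 0 < se) :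
    (Vmat g h m sa sb sc se)⁻¹ =
      (se)⁻¹ • (((1 : Matrix (Fin g) (Fin g) ℝ) ⊗ₖ (1 : Matrix (Fin h) (Fin h) ℝ)) ⊗ₖ Cmat m) +
      (se + m * sc)⁻¹ • ((Cmat g ⊗ₖ Cmat h) ⊗ₖ Jbar m) +
      (se + m * sc + h * m * sa)⁻¹ • ((Cmat g ⊗ₖ Jbar h) ⊗ₖ Jbar m) +
      (se + m * sc + g * m * sb)⁻¹ • ((Jbar g ⊗ₖ Cmat h) ⊗ₖ Jbar m) +
      (se + m * sc + h * m * sa + g * m * sb)⁻¹ • ((Jbar g ⊗ₖ Jbar h) ⊗ₖ Jbar m) := by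
  have h1 : (0:ℝ) < se + m * sc := by positivity
  have h2 : (0:ℝ) < se + m * sc + h * m * sa := by positivity
  have h3 : (0:ℝ) < se + m * sc + g * m * sb := by positivity
  have h4 : (0:ℝ) < se + m * sc + h * m * sa + g * m * sb := by positivity
  apply Matrix.inv_eq_right_inv
  rw [Vmat, Jmat_eq g hg, Jmat_eq h hh, Jmat_eq m hm]
  rw [show (1 : Matrix ((Fin g × Fin h) × Fin m) ((Fin g × Fin h) × Fin m) ℝ) =
      ((1 : Matrix (Fin g) (Fin g) ℝ) ⊗ₖ (1 : Matrix (Fin h) (Fin h) ℝ)) ⊗ₖ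
        (1 : Matrix (Fin m) (Fin m) ℝ) by
    rw [Matrix.one_kronecker_one, Matrix.one_kronecker_one]]
  simp only [← Cmat_add_Jbar g, ← Cmat_add_Jbar h, ← Cmat_add_Jbar m]
  simp only [Matrix.kronecker_add, Matrix.add_kronecker, Matrix.kronecker_smul,
    Matrix.smul_kronecker, smul_add, smul_smul]
  simp only [add_mul, mul_add, Matrix.smul_mul, Matrix.mul_smul, smul_add, smul_smul]
  simp only [← Matrix.mul_kronecker_mul,
    Cmat_mul_Cmat g hg, Cmat_mul_Cmat h hh, Cmat_mul_Cmat m hm,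
    Cmat_mul_Jbar g hg, Cmat_mul_Jbar h hh, Cmat_mul_Jbar m hm,
    Jbar_mul_Cmat g hg, Jbar_mul_Cmat h hh, Jbar_mul_Cmat m hm,
    Jbar_mul_Jbar g hg, Jbar_mul_Jbar h hh, Jbar_mul_Jbar m hm]
  simp only [Matrix.kronecker_zero, Matrix.zero_kronecker, smul_zero, add_zero, zero_add]
  match_scalars <;> field_simp <;> ring
end

section
/- The determinant of V equals λ0^{gh(m−1)} · λ1^{(g−1)(h−1)} · λ2^{g−1} · λ3^{h−1} · λ4, where λ0 = σe², λ1 = σe² + mσγ², λ2 = λ1 + hmσα², λ3 = λ1 + gmσβ², λ4 = λ1 + hmσα² + gmσβ². -/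
open Matrix Kronecker

/-- Change of basis matrix diagonalizing the all-ones matrix. -/
noncomputable def Pmat (a : ℕ) [NeZero a] : Matrix (Fin a) (Fin a) ℝ :=
  Matrix.of fun i j =>
    (if i = j then (1 : ℝ) else 0) + (if j = 0 then 1 else 0) - (if i = 0 then 1 else 0)

/-- The diagonal form of the all-ones matrix. -/
noncomputable def Dmat (a : ℕ) [NeZero a] : Matrix (Fin a) (Fin a) ℝ :=
  Matrix.diagonal (fun k => if k = 0 then (a : ℝ) else 0)

lemma det_Pmat (a : ℕ) [NeZero a] : (Pmat a).det = (a : ℝ) := by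
  classical
  set A : Matrix (Fin a) (Fin 2) ℝ :=
    Matrix.of (fun x t => if t = 0 then (1:ℝ) else -(if x = 0 then 1 else 0)) with hA
  set B : Matrix (Fin 2) (Fin a) ℝ :=
    Matrix.of (fun t y => if t = 0 then (if y = 0 then (1:ℝ) else 0) else 1) with hB
  have hP : Pmat a = 1 + A * B := by
    ext i j
    simp [Pmat, hA, hB, Matrix.mul_apply, Fin.sum_univ_two, Matrix.one_apply, Matrix.add_apply]
    ring
  rw [hP, Matrix.det_one_add_mul_comm]
  have h00 : (B * A) 0 0 = 1 := by
    simp [hA, hB, Matrix.mul_apply]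
  have h01 : (B * A) 0 1 = -1 := by
    simp [hA, hB, Matrix.mul_apply]
  have h10 : (B * A) 1 0 = (a : ℝ) := by
    simp [hA, hB, Matrix.mul_apply]
  have h11 : (B * A) 1 1 = -1 := by
    simp [hA, hB, Matrix.mul_apply]
  rw [Matrix.det_fin_two]
  simp [Matrix.add_apply, Matrix.one_apply, h00, h01, h10, h11]

lemma isUnit_Pmat (a : ℕ) [NeZero a] : IsUnit (Pmat a) := by
  rw [Matrix.isUnit_iff_isUnit_det, det_Pmat]
  exact isUnit_iff_ne_zero.mpr (Nat.cast_ne_zero.mpr (NeZero.ne a))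

lemma J_mul_Pmat (a : ℕ) [NeZero a] : Jmat a * Pmat a = Pmat a * Dmat a := by
  classical
  ext i j
  rw [Matrix.mul_apply]
  have hL : ∑ x, Jmat a i x * Pmat a x j = if j = 0 then (a : ℝ) else 0 := by
    have : ∀ x : Fin a, Jmat a i x * Pmat a x j =
        ((if x = j then (1:ℝ) else 0) + (if j = 0 then 1 else 0)) - (if x = 0 then 1 else 0) := by
      intro x
      simp [Jmat, Pmat]
    rw [Finset.sum_congr rfl (fun x _ => this x)]
    rw [Finset.sum_sub_distrib, Finset.sum_add_distrib]
    simp [Finset.sum_ite_eq, Finset.card_univ, mul_comm]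
  rw [hL, Dmat, Matrix.mul_diagonal]
  by_cases hj : j = 0
  · simp [hj, Pmat]
  · simp [hj]

lemma prod_ite_zero (n : ℕ) [NeZero n] (A B : ℝ) :
    (∏ k : Fin n, (if k = 0 then A else B)) = A * B ^ (n - 1) := by
  classical
  rw [← Finset.mul_prod_erase Finset.univ _ (Finset.mem_univ (0 : Fin n))]
  simp only [if_pos rfl]
  congr 1
  rw [Finset.prod_congr rfl (fun x hx => by
        rw [if_neg (Finset.mem_erase.mp hx).1]), Finset.prod_const]
  congr 1
  rw [Finset.card_erase_of_mem (Finset.mem_univ _), Finset.card_univ, Fintype.card_fin]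

theorem stmt5 (g h m : ℕ) (hg : 0 < g) (hh : 0 < h) (hm : 0 < m)
    (sa sb sc se : ℝ) (hsa : 0 ≤ sa) (hsb : 0 ≤ sb) (hsc : 0 ≤ sc) (hse : 0 < se) :
    (Vmat g h m sa sb sc se).det =
      se ^ (g * h * (m - 1)) *
      (se + m * sc) ^ ((g - 1) * (h - 1)) *
      (se + m * sc + h * m * sa) ^ (g - 1) *
      (se + m * sc + g * m * sb) ^ (h - 1) *
      (se + m * sc + h * m * sa + g * m * sb) := by
  classical
  haveI : NeZero g := ⟨hg.ne'⟩
  haveI : NeZero h := ⟨hh.ne'⟩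
  haveI : NeZero m := ⟨hm.ne'⟩
  set P : Matrix ((Fin g × Fin h) × Fin m) ((Fin g × Fin h) × Fin m) ℝ :=
    (Pmat g ⊗ₖ Pmat h) ⊗ₖ Pmat m with hPdef
  set dfun : ((Fin g × Fin h) × Fin m) → ℝ := fun p =>
    sa * ((1 * (if p.1.2 = 0 then (h:ℝ) else 0)) * (if p.2 = 0 then (m:ℝ) else 0)) +
    (sb * (((if p.1.1 = 0 then (g:ℝ) else 0) * 1) * (if p.2 = 0 then (m:ℝ) else 0)) +
    (sc * ((1 * 1) * (if p.2 = 0 then (m:ℝ) else 0)) + se * 1)) with hdfun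
  have hVP : Vmat g h m sa sb sc se * P = P * Matrix.diagonal dfun := by
    have h1g : (1 : Matrix (Fin g) (Fin g) ℝ) * Pmat g = Pmat g * Matrix.diagonal (fun _ => (1:ℝ)) := by
      rw [Matrix.diagonal_one, one_mul, mul_one]
    have h1h : (1 : Matrix (Fin h) (Fin h) ℝ) * Pmat h = Pmat h * Matrix.diagonal (fun _ => (1:ℝ)) := by
      rw [Matrix.diagonal_one, one_mul, mul_one]
    have hDg : Jmat g * Pmat g = Pmat g * Matrix.diagonal (fun k => if k = 0 then (g:ℝ) else 0) :=
      J_mul_Pmat g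
    have hDh : Jmat h * Pmat h = Pmat h * Matrix.diagonal (fun k => if k = 0 then (h:ℝ) else 0) :=
      J_mul_Pmat h
    have hDm : Jmat m * Pmat m = Pmat m * Matrix.diagonal (fun k => if k = 0 then (m:ℝ) else 0) :=
      J_mul_Pmat m
    have h1big : (1 : Matrix ((Fin g × Fin h) × Fin m) ((Fin g × Fin h) × Fin m) ℝ) *
        ((Pmat g ⊗ₖ Pmat h) ⊗ₖ Pmat m) = ((Pmat g ⊗ₖ Pmat h) ⊗ₖ Pmat m) *
        Matrix.diagonal (fun _ => (1:ℝ)) := by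
      rw [Matrix.diagonal_one, one_mul, mul_one]
    rw [Vmat, hPdef]
    rw [Matrix.add_mul, Matrix.add_mul, Matrix.add_mul]
    rw [Matrix.smul_mul, Matrix.smul_mul, Matrix.smul_mul, Matrix.smul_mul]
    rw [← Matrix.mul_kronecker_mul, ← Matrix.mul_kronecker_mul,
        ← Matrix.mul_kronecker_mul, ← Matrix.mul_kronecker_mul,
        ← Matrix.mul_kronecker_mul, ← Matrix.mul_kronecker_mul]
    rw [hDg, hDh, hDm, h1g, h1h, h1big]
    rw [Matrix.mul_kronecker_mul, Matrix.mul_kronecker_mul,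
        Matrix.mul_kronecker_mul, Matrix.mul_kronecker_mul,
        Matrix.mul_kronecker_mul, Matrix.mul_kronecker_mul]
    rw [Matrix.diagonal_kronecker_diagonal, Matrix.diagonal_kronecker_diagonal,
        Matrix.diagonal_kronecker_diagonal, Matrix.diagonal_kronecker_diagonal,
        Matrix.diagonal_kronecker_diagonal, Matrix.diagonal_kronecker_diagonal]
    rw [← Matrix.mul_smul, ← Matrix.mul_smul, ← Matrix.mul_smul, ← Matrix.mul_smul]
    rw [← Matrix.mul_add, ← Matrix.mul_add, ← Matrix.mul_add]
    congr 1
    rw [← Matrix.diagonal_smul, ← Matrix.diagonal_smul, ← Matrix.diagonal_smul, ← Matrix.diagonal_smul,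
        Matrix.diagonal_add, Matrix.diagonal_add, Matrix.diagonal_add]
    apply congrArg Matrix.diagonal
    funext p
    simp only [hdfun, Pi.smul_apply, smul_eq_mul]
    ring
  have hunit : IsUnit P := by
    rw [hPdef, Matrix.isUnit_iff_isUnit_det, Matrix.det_kronecker, Matrix.det_kronecker]
    exact (((isUnit_Pmat g).map detMonoidHom).pow _ |>.mul
      ((isUnit_Pmat h).map detMonoidHom |>.pow _)).pow _ |>.mul
      (((isUnit_Pmat m).map detMonoidHom).pow _)
  have hV : Vmat g h m sa sb sc se = P * Matrix.diagonal dfun * P⁻¹ := by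
    have := Matrix.mul_nonsing_inv P ((Matrix.isUnit_iff_isUnit_det P).mp hunit)
    calc Vmat g h m sa sb sc se
        = Vmat g h m sa sb sc se * (P * P⁻¹) := by rw [this, mul_one]
      _ = (Vmat g h m sa sb sc se * P) * P⁻¹ := by rw [mul_assoc]
      _ = P * Matrix.diagonal dfun * P⁻¹ := by rw [hVP]
  rw [hV, Matrix.det_conj hunit, Matrix.det_diagonal]
  -- now compute the product
  set L1 : ℝ := se + m * sc with hL1
  set L2 : ℝ := se + m * sc + h * m * sa with hL2
  set L3 : ℝ := se + m * sc + g * m * sb with hL3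
  set L4 : ℝ := se + m * sc + h * m * sa + g * m * sb with hL4
  have hd : ∀ p : (Fin g × Fin h) × Fin m, dfun p =
      if p.2 = 0 then (if p.1.1 = 0 then (if p.1.2 = 0 then L4 else L3)
        else (if p.1.2 = 0 then L2 else L1)) else se := by
    rintro ⟨⟨i, j⟩, k⟩
    by_cases hk : k = 0 <;> by_cases hi : i = 0 <;> by_cases hj : j = 0 <;>
      simp [hdfun, hk, hi, hj, hL1, hL2, hL3, hL4] <;> ring
  rw [Finset.prod_congr rfl (fun p _ => hd p)]
  rw [Fintype.prod_prod_type]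
  have hstep1 : ∀ ij : Fin g × Fin h,
      (∏ k : Fin m, (if k = 0 then (if ij.1 = 0 then (if ij.2 = 0 then L4 else L3)
          else (if ij.2 = 0 then L2 else L1)) else se)) =
      (if ij.1 = 0 then (if ij.2 = 0 then L4 else L3)
          else (if ij.2 = 0 then L2 else L1)) * se ^ (m - 1) := by
    intro ij; exact prod_ite_zero m _ _
  rw [Finset.prod_congr rfl (fun ij _ => hstep1 ij)]
  rw [Finset.prod_mul_distrib, Finset.prod_const, Finset.card_univ]
  rw [Fintype.prod_prod_type]
  have hstep2 : ∀ i : Fin g,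
      (∏ j : Fin h, (if i = 0 then (if j = 0 then L4 else L3)
          else (if j = 0 then L2 else L1))) =
      if i = 0 then L4 * L3 ^ (h - 1) else L2 * L1 ^ (h - 1) := by
    intro i
    by_cases hi : i = 0 <;> simp only [hi, if_pos, if_neg, ite_true, ite_false] <;>
      exact prod_ite_zero h _ _
  rw [Finset.prod_congr rfl (fun i _ => hstep2 i)]
  rw [prod_ite_zero g]
  have hcard : Fintype.card (Fin g × Fin h) = g * h := by
    simp [Fintype.card_prod]
  rw [hcard]
  rw [mul_pow, ← pow_mul, ← pow_mul, Nat.mul_comm (h - 1) (g - 1),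
    Nat.mul_comm (m - 1) (g * h)]
  ring
end
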